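/- Let θ < λ be regular cardinals and D a θ-covering matrix for λ such that CP(D) holds. Then for every successor ordinal η < θ with θ^{+η} < λ, the set A_D ∩ S^λ_{θ^{+η}} is stationary in λ. -/

import Mathlib

noncomputable section

universe u

open Cardinal Set

/-- The order type of a set of ordinals: the unique ordinal `o` such that `s` is
order-isomorphic to `Set.Iio o` (and `0` if there is no such ordinal). -/
def otp (s : Set Ordinal) : Ordinal :=
  sInf {o : Ordinal | Nonempty (s ≃o Set.Iio o)}

/-- `A` is unbounded in `β`. -/
def IsUnboundedIn (A : Set Ordinal) (β : Ordinal) : Prop :=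
  ∀ γ < β, ∃ δ ∈ A, γ ≤ δ

/-- `γ` is a limit of elements of `C`. -/
def IsAccPt (C : Set Ordinal) (γ : Ordinal) : Prop :=
  ∀ δ < γ, ∃ ε ∈ C, δ < ε ∧ ε < γ

/-- `C` is club in `β`: a subset of `β`, unbounded in `β`, and closed under limits below `β`. -/
def IsClubIn (C : Set Ordinal) (β : Ordinal) : Prop :=
  C ⊆ Set.Iio β ∧ IsUnboundedIn C β ∧ ∀ γ < β, 0 < γ → IsAccPt C γ → γ ∈ C

/-- `S` is stationary in `β`: it meets every club in `β`. -/
def IsStationaryIn (S : Set Ordinal) (β : Ordinal) : Prop :=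
  ∀ C, IsClubIn C β → (S ∩ C).Nonempty

/-- `D` is a `θ`-covering matrix for `lam`. -/
def IsCoveringMatrix (θ lam : Cardinal) (D : Ordinal → Ordinal → Set Ordinal) : Prop :=
  (∀ β < lam.ord, (⋃ i ∈ Set.Iio θ.ord, D i β) = Set.Iio β) ∧
  (∀ β < lam.ord, ∀ i j, i < j → j < θ.ord → D i β ⊆ D j β) ∧
  (∀ β γ, β < γ → γ < lam.ord → ∀ i < θ.ord, ∃ j < θ.ord, D i β ⊆ D j γ)

/-- `D` is transitive. -/
def TransitiveMatrix (θ lam : Cardinal) (D : Ordinal → Ordinal → Set Ordinal) : Prop :=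
  ∀ α β, α < β → β < lam.ord → ∀ i < θ.ord, α ∈ D i β → D i α ⊆ D i β

/-- `D` is uniform: every limit `β < lam` has some `D i β` containing a club in `β`. -/
def UniformMatrix (θ lam : Cardinal) (D : Ordinal → Ordinal → Set Ordinal) : Prop :=
  ∀ β < lam.ord, Order.IsSuccLimit β → ∃ i < θ.ord, ∃ C ⊆ D i β, IsClubIn C β

/-- `D` is normal: the order types of its entries are bounded below `lam`. -/
def NormalMatrix (θ lam : Cardinal) (D : Ordinal → Ordinal → Set Ordinal) : Prop :=
  ∃ b < lam.ord, ∀ i < θ.ord, ∀ γ < lam.ord, otp (D i γ) < b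

/-- `β_D`: the least ordinal strictly above the order types of all entries of `D`. -/
def matrixBound (θ lam : Cardinal) (D : Ordinal → Ordinal → Set Ordinal) : Ordinal :=
  sInf {b | ∀ i < θ.ord, ∀ γ < lam.ord, otp (D i γ) < b}

/-- `D` is downward coherent. -/
def DownwardCoherent (θ lam : Cardinal) (D : Ordinal → Ordinal → Set Ordinal) : Prop :=
  ∀ α β, α < β → β < lam.ord → ∀ i < θ.ord, ∃ j < θ.ord, D i β ∩ Set.Iio α ⊆ D j α

/-- `D` is locally downward coherent. -/
def LocallyDownwardCoherent (θ lam : Cardinal.{u})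
    (D : Ordinal.{u} → Ordinal.{u} → Set Ordinal.{u}) : Prop :=
  ∀ X : Set Ordinal.{u}, X ⊆ Set.Iio lam.ord → #X ≤ Cardinal.lift.{u + 1} θ →
    ∃ γX < lam.ord, ∀ β < lam.ord, ∀ i < θ.ord, ∃ j < θ.ord,
      X ∩ D i β ⊆ X ∩ D j γX

/-- `D` is strongly locally downward coherent. -/
def StronglyLocallyDownwardCoherent (θ lam : Cardinal.{u})
    (D : Ordinal.{u} → Ordinal.{u} → Set Ordinal.{u}) : Prop :=
  ∀ X : Set Ordinal.{u}, X ⊆ Set.Iio lam.ord → #X ≤ Cardinal.lift.{u + 1} θ →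
    ∃ γX < lam.ord, ∀ β, γX ≤ β → β < lam.ord →
      ∃ i < θ.ord, ∀ j, i ≤ j → j < θ.ord → X ∩ D j β = X ∩ D j γX

/-- `D` covers `[T]^κ`. -/
def Covers (θ lam : Cardinal.{u}) (D : Ordinal.{u} → Ordinal.{u} → Set Ordinal.{u})
    (T : Set Ordinal.{u}) (κ : Cardinal.{u}) : Prop :=
  ∀ X ⊆ T, #X = Cardinal.lift.{u + 1} κ → ∃ i < θ.ord, ∃ β < lam.ord, X ⊆ D i β

/-- The covering property `CP(D)`. -/
def CP (θ lam : Cardinal) (D : Ordinal → Ordinal → Set Ordinal) : Prop :=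
  ∃ T ⊆ Set.Iio lam.ord, IsUnboundedIn T lam.ord ∧ Covers θ lam D T θ

/-- `CP(lam, θ)`: `CP(D)` holds for every locally downward coherent `θ`-covering matrix `D`. -/
def CPAll (θ lam : Cardinal) : Prop :=
  ∀ D, IsCoveringMatrix θ lam D → LocallyDownwardCoherent θ lam D → CP θ lam D

/-- `A_D`: the set of good points for `D`. -/
def goodPoints (θ lam : Cardinal) (D : Ordinal → Ordinal → Set Ordinal) : Set Ordinal :=
  {β | β < lam.ord ∧ θ < Ordinal.cof β ∧
    ∃ A ⊆ Set.Iio β, IsUnboundedIn A β ∧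
      ∀ γ < β, ∃ α < β, ∃ i < θ.ord, A ∩ Set.Iio γ ⊆ D i α}

/-- `θ^{+η}`: the `η`-th iterated cardinal successor of `θ`. -/
def iterSucc (θ : Cardinal) (η : Ordinal) : Cardinal :=
  Ordinal.limitRecOn η θ (fun _ ih => Order.succ ih)
    (fun o _ ih => ⨆ i : Set.Iio o, ih i.1 i.2)

/-- `f <* g` mod bounded subsets of `θ`. -/
def ltStar (θ : Cardinal) (f g : Ordinal → Ordinal) : Prop :=
  ∃ i < θ.ord, ∀ j, i ≤ j → j < θ.ord → f j < g j

/-- `⟨f β : β < δ⟩` is a club-increasing sequence of functions from `θ` to the ordinals. -/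
def ClubIncreasing (θ : Cardinal) (δ : Ordinal) (f : Ordinal → Ordinal → Ordinal) : Prop :=
  (∀ β < δ, ∀ i j, i ≤ j → j < θ.ord → f β i ≤ f β j) ∧
  (∀ α β, α < β → β < δ → ltStar θ (f α) (f β)) ∧
  (∀ β < δ, θ < Ordinal.cof β → ∃ C, IsClubIn C β ∧ ∃ i < θ.ord,
    ∀ α ∈ C, ∀ j, i ≤ j → j < θ.ord → f α j < f β j)

/-- `γ_f`: the least ordinal strictly above all values of the sequence. -/
def seqBound (θ : Cardinal) (δ : Ordinal) (f : Ordinal → Ordinal → Ordinal) : Ordinal :=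
  sInf {γ | ∀ β < δ, ∀ i < θ.ord, f β i < γ}

/-- `g` is an exact upper bound for `⟨f β : β < δ⟩` with respect to `<*` on `θ`. -/
def IsEub (θ : Cardinal) (δ : Ordinal) (f : Ordinal → Ordinal → Ordinal)
    (g : Ordinal → Ordinal) : Prop :=
  (∀ β < δ, ltStar θ (f β) g) ∧
  ∀ h : Ordinal → Ordinal, ltStar θ h g → ∃ β < δ, ltStar θ h (f β)

/-- The simultaneous stationary reflection principle `R(lam, θ)`. -/
def RPrinciple (lam θ : Cardinal) : Prop :=
  ∃ S ⊆ Set.Iio lam.ord, IsStationaryIn S lam.ord ∧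
    ∀ T : Ordinal → Set Ordinal,
      (∀ j < θ.ord, T j ⊆ S ∧ IsStationaryIn (T j) lam.ord) →
      ∃ α < lam.ord, ℵ₀ < Ordinal.cof α ∧
        ∀ j < θ.ord, IsStationaryIn (T j ∩ Set.Iio α) α

/-- A `□_κ`-sequence. -/
def IsSquareSeq (κ : Cardinal) (C : Ordinal → Set Ordinal) : Prop :=
  ∀ β < (Order.succ κ).ord, Order.IsSuccLimit β →
    IsClubIn (C β) β ∧ otp (C β) ≤ κ.ord ∧
    ∀ α ∈ C β, 0 < α → IsAccPt (C β) α → C β ∩ Set.Iio α = C α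

/-- The square principle `□_κ`. -/
def SquarePrinciple (κ : Cardinal) : Prop := ∃ C, IsSquareSeq κ C

/-- `f <* g` mod finite on `B ⊆ ω`. -/
def ltStarB (B : Set ℕ) (f g : ℕ → Ordinal) : Prop :=
  ∃ m, ∀ n ∈ B, m ≤ n → f n < g n

/-- `g` is an exact upper bound for `⟨f α : α < δ⟩` with respect to `<*` mod finite on `B`. -/
def IsEubB (B : Set ℕ) (δ : Ordinal) (f : Ordinal → ℕ → Ordinal) (g : ℕ → Ordinal) : Prop :=
  (∀ α < δ, ltStarB B (f α) g) ∧
  ∀ h : ℕ → Ordinal, ltStarB B h g → ∃ α < δ, ltStarB B h (f α)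

/-- A scale of length `ℵ_{ω+1}` in `∏_{n ∈ B} ℵ_n`. -/
def IsScale (B : Set ℕ) (f : Ordinal → ℕ → Ordinal) : Prop :=
  (∀ α < (Cardinal.aleph (Ordinal.omega0 + 1)).ord, ∀ n ∈ B, f α n < (Cardinal.aleph n).ord) ∧
  (∀ α β, α < β → β < (Cardinal.aleph (Ordinal.omega0 + 1)).ord → ltStarB B (f α) (f β)) ∧
  (∀ g : ℕ → Ordinal, (∀ n ∈ B, g n < (Cardinal.aleph n).ord) →
    ∃ α < (Cardinal.aleph (Ordinal.omega0 + 1)).ord, ltStarB B g (f α))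


section AuxLemmas

open Ordinal

theorem iterSucc_zero (θ : Cardinal) : iterSucc θ 0 = θ :=
  Ordinal.limitRecOn_zero _ _ _

theorem iterSucc_succ' (θ : Cardinal.{u}) (σ : Ordinal.{u}) :
    iterSucc θ (Order.succ σ) = Order.succ (iterSucc θ σ) := by
  rw [iterSucc, Ordinal.limitRecOn_succ]
  rfl

theorem iterSucc_succ (θ : Cardinal.{u}) (σ : Ordinal.{u}) :
    iterSucc θ (σ + 1) = Order.succ (iterSucc θ σ) := by
  rw [Ordinal.add_one_eq_succ, iterSucc_succ']

theorem iterSucc_limit (θ : Cardinal.{u}) {ρ : Ordinal.{u}} (h : Order.IsSuccLimit ρ) :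
    iterSucc θ ρ = ⨆ i : Set.Iio ρ, iterSucc θ i.1 := by
  rw [iterSucc, Ordinal.limitRecOn_limit _ _ _ _ h]
  rfl

theorem iterSucc_mono (θ : Cardinal.{u}) {σ ρ : Ordinal.{u}} (h : σ ≤ ρ) :
    iterSucc θ σ ≤ iterSucc θ ρ := by
  induction ρ using Ordinal.induction with
  | _ ρ IH =>
    rcases Ordinal.zero_or_succ_or_isSuccLimit ρ with hz | ⟨τ, rfl⟩ | hlim
    · subst hz; rw [nonpos_iff_eq_zero.mp h]
    · rcases eq_or_lt_of_le h with rfl | hlt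
      · rfl
      · have hστ : σ ≤ τ := Order.lt_succ_iff.mp hlt
        calc iterSucc θ σ ≤ iterSucc θ τ := IH τ (Order.lt_succ τ) hστ
        _ ≤ Order.succ (iterSucc θ τ) := Order.le_succ _
        _ = iterSucc θ (Order.succ τ) := (iterSucc_succ' θ τ).symm
    · rcases eq_or_lt_of_le h with rfl | hlt
      · rfl
      · rw [iterSucc_limit θ hlim]
        exact le_ciSup (f := fun i : Set.Iio ρ => iterSucc θ i.1) (Cardinal.bddAbove_range _) ⟨σ, hlt⟩

theorem le_iterSucc (θ : Cardinal.{u}) (ρ : Ordinal.{u}) : θ ≤ iterSucc θ ρ := by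
  conv_lhs => rw [← iterSucc_zero θ]
  exact iterSucc_mono θ (zero_le (a := ρ))

theorem unbounded_card {lam : Cardinal.{u}} (hlam : lam.IsRegular) {U : Set Ordinal.{u}}
    (hU : U ⊆ Set.Iio lam.ord) (hUu : IsUnboundedIn U lam.ord) :
    Cardinal.lift.{u+1} lam ≤ #U := by
  by_contra hcon
  push_neg at hcon
  obtain ⟨c, hc⟩ := Cardinal.mem_range_lift_of_le hcon.le
  have hclam : c < lam := by
    rwa [← Cardinal.lift_lt.{u, u+1}, hc]
  have hequiv : Nonempty (Set.Iio c.ord ≃ U) := by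
    rw [← Cardinal.eq, Ordinal.mk_Iio_ordinal, Cardinal.card_ord, hc]
  obtain ⟨e⟩ := hequiv
  set s : Ordinal := Ordinal.bsup c.ord (fun ζ h => ((e ⟨ζ, h⟩ : U) : Ordinal)) with hs
  have hslam : s < lam.ord := by
    apply Ordinal.bsup_lt_ord _ (fun ζ h => hU (e ⟨ζ, h⟩).2)
    rwa [Cardinal.card_ord, hlam.cof_eq]
  have hs1 : s + 1 < lam.ord := (Cardinal.isSuccLimit_ord hlam.aleph0_le).succ_lt hslam
  obtain ⟨δ, hδU, hδge⟩ := hUu (s + 1) hs1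
  have hds : δ ≤ s := by
    have h1 : (⟨(e.symm ⟨δ, hδU⟩).1, (e.symm ⟨δ, hδU⟩).2⟩ : Set.Iio c.ord) = e.symm ⟨δ, hδU⟩ :=
      Subtype.ext rfl
    have := Ordinal.le_bsup (fun ζ (h : ζ < c.ord) => ((e ⟨ζ, h⟩ : U) : Ordinal))
      (e.symm ⟨δ, hδU⟩).1 (e.symm ⟨δ, hδU⟩).2
    rwa [h1, Equiv.apply_symm_apply] at this
  have hlt2 : s < δ := by rwa [Ordinal.add_one_eq_succ, Order.succ_le_iff] at hδge
  exact absurd hlt2 (not_lt.mpr hds)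

end AuxLemmas
section CoverLe

/-- Initial pieces of an enumerated set of ordinals. -/
def pieceSet {o : Ordinal.{u}} {X : Set Ordinal.{u}} (e : (Set.Iio o) ≃ X) (ζ : Ordinal.{u}) :
    Set Ordinal.{u} :=
  Subtype.val '' (e '' {t : Set.Iio o | t.1 < ζ})

theorem pieceSet_subset {o : Ordinal.{u}} {X : Set Ordinal.{u}} (e : (Set.Iio o) ≃ X)
    (ζ : Ordinal.{u}) : pieceSet e ζ ⊆ X := by
  rintro x ⟨y, _, rfl⟩
  exact y.2

theorem pieceSet_mono {o : Ordinal.{u}} {X : Set Ordinal.{u}} (e : (Set.Iio o) ≃ X)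
    {ζ₁ ζ₂ : Ordinal.{u}} (h : ζ₁ ≤ ζ₂) : pieceSet e ζ₁ ⊆ pieceSet e ζ₂ := by
  rintro x ⟨y, ⟨t, ht, rfl⟩, rfl⟩
  exact ⟨e t, ⟨t, lt_of_lt_of_le ht h, rfl⟩, rfl⟩

theorem mem_pieceSet {o : Ordinal.{u}} {X : Set Ordinal.{u}} (e : (Set.Iio o) ≃ X)
    {x : Ordinal.{u}} (hx : x ∈ X) {ζ : Ordinal.{u}}
    (h : ((e.symm ⟨x, hx⟩ : Set.Iio o) : Ordinal) < ζ) : x ∈ pieceSet e ζ := by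
  refine ⟨e (e.symm ⟨x, hx⟩), ⟨e.symm ⟨x, hx⟩, h, rfl⟩, ?_⟩
  rw [Equiv.apply_symm_apply]

theorem pieceSet_card {o : Ordinal.{u}} {X : Set Ordinal.{u}} (e : (Set.Iio o) ≃ X)
    (ζ : Ordinal.{u}) : #(pieceSet e ζ) ≤ Cardinal.lift.{u+1} ζ.card := by
  have h1 : #(pieceSet e ζ) ≤ #({t : Set.Iio o | t.1 < ζ}) :=
    (Cardinal.mk_image_le).trans Cardinal.mk_image_le
  have h2 : #({t : Set.Iio o | t.1 < ζ}) ≤ #(Set.Iio ζ) := by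
    refine Cardinal.mk_le_of_injective (f := fun t => ⟨t.1.1, t.2⟩) ?_
    intro a b hab
    have hv : a.1.1 = b.1.1 := by simpa using congrArg Subtype.val hab
    exact Subtype.ext (Subtype.ext hv)
  calc #(pieceSet e ζ) ≤ #(Set.Iio ζ) := h1.trans h2
    _ = Cardinal.lift.{u+1} ζ.card := Ordinal.mk_Iio_ordinal ζ

theorem cover_le {θ lam : Cardinal.{u}} (hθ : θ.IsRegular) (hlam : lam.IsRegular)
    (hθlam : θ < lam) {D : Ordinal.{u} → Ordinal.{u} → Set Ordinal.{u}}
    (hD : IsCoveringMatrix θ lam D) {T : Set Ordinal.{u}} (hT : T ⊆ Set.Iio lam.ord)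
    (hTu : IsUnboundedIn T lam.ord) (hcov : Covers θ lam D T θ) :
    ∀ ρ : Ordinal.{u}, ρ < θ.ord → iterSucc θ ρ < lam →
      ∀ X, X ⊆ T → #X ≤ Cardinal.lift.{u+1} (iterSucc θ ρ) →
        ∃ i, i < θ.ord ∧ ∃ δ, δ < lam.ord ∧ X ⊆ D i δ := by
  intro ρ
  induction ρ using Ordinal.induction with
  | _ ρ IH =>
    intro hρθ hρlam X hXT hXcard
    rcases Ordinal.zero_or_succ_or_isSuccLimit ρ with rfl | ⟨σ, rfl⟩ | hlim
    · -- base case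
      rw [iterSucc_zero] at hXcard
      obtain ⟨S, hST, hScard⟩ : ∃ S, S ⊆ T ∧ #S = Cardinal.lift.{u+1} θ :=
        Cardinal.le_mk_iff_exists_subset.mp
          ((Cardinal.lift_le.mpr hθlam.le).trans (unbounded_card hlam hT hTu))
      have hYcard : #(X ∪ S : Set Ordinal) = Cardinal.lift.{u+1} θ := by
        refine le_antisymm ?_ (hScard ▸ Cardinal.mk_le_mk_of_subset Set.subset_union_right)
        calc #(X ∪ S : Set Ordinal) ≤ #X + #S := Cardinal.mk_union_le _ _
          _ ≤ Cardinal.lift.{u+1} θ + Cardinal.lift.{u+1} θ := add_le_add hXcard hScard.le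
          _ = Cardinal.lift.{u+1} θ :=
            Cardinal.add_eq_self (Cardinal.aleph0_le_lift.mpr hθ.aleph0_le)
      obtain ⟨i, hi, δ, hδ, hsub⟩ := hcov (X ∪ S) (Set.union_subset hXT hST) hYcard
      exact ⟨i, hi, δ, hδ, (Set.subset_union_left).trans hsub⟩
    · -- successor case
      have hσθ : σ < θ.ord := (Order.lt_succ σ).trans hρθ
      set ν := iterSucc θ σ with hν
      rw [iterSucc_succ'] at hρlam hXcard
      have hθν : θ ≤ ν := le_iterSucc θ σ
      have hνlam : ν < lam := (Order.lt_succ ν).trans hρlam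
      have hνinf : ℵ₀ ≤ ν := hθ.aleph0_le.trans hθν
      have hμreg : (Order.succ ν).IsRegular := Cardinal.isRegular_succ hνinf
      obtain ⟨c, hc⟩ := Cardinal.mem_range_lift_of_le hXcard
      by_cases hcase : c ≤ ν
      · exact IH σ (Order.lt_succ σ) hσθ hνlam X hXT
          (by rw [← hc]; exact Cardinal.lift_le.mpr hcase)
      · have hceq : c = Order.succ ν :=
          le_antisymm (by rw [← Cardinal.lift_le.{u+1}, hc]; exact hXcard)
            (Order.succ_le_of_lt (not_le.mp hcase))
        have hXμ : #X = Cardinal.lift.{u+1} (Order.succ ν) := by rw [← hc, hceq]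
        obtain ⟨e⟩ : Nonempty ((Set.Iio (Order.succ ν).ord) ≃ X) := by
          rw [← Cardinal.eq, Ordinal.mk_Iio_ordinal, Cardinal.card_ord, hXμ]
        have hμord : Order.IsSuccLimit ((Order.succ ν).ord) :=
          Cardinal.isSuccLimit_ord (hνinf.trans (Order.le_succ ν))
        have hpieces : ∀ ζ, ζ < (Order.succ ν).ord →
            ∃ i, i < θ.ord ∧ ∃ δ, δ < lam.ord ∧ pieceSet e ζ ⊆ D i δ := by
          intro ζ hζ
          refine IH σ (Order.lt_succ σ) hσθ hνlam _ ((pieceSet_subset e ζ).trans hXT) ?_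
          calc #(pieceSet e ζ) ≤ Cardinal.lift.{u+1} ζ.card := pieceSet_card e ζ
            _ ≤ Cardinal.lift.{u+1} ν :=
              Cardinal.lift_le.mpr (Order.lt_succ_iff.mp (Cardinal.lt_ord.mp hζ))
        choose iF hiF δF hδF hsubF using hpieces
        set δ := Ordinal.blsub (Order.succ ν).ord δF with hδdef
        have hδlam : δ < lam.ord :=
          Ordinal.blsub_lt_ord (by rw [Cardinal.card_ord, hlam.cof_eq]; exact hρlam) hδF
        have hj : ∀ ζ (h : ζ < (Order.succ ν).ord),
            ∃ j, j < θ.ord ∧ D (iF ζ h) (δF ζ h) ⊆ D j δ := by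
          intro ζ h
          obtain ⟨j, hj1, hj2⟩ :=
            hD.2.2 (δF ζ h) δ (Ordinal.lt_blsub δF ζ h) hδlam (iF ζ h) (hiF ζ h)
          exact ⟨j, hj1, hj2⟩
        choose jF hjF hsubj using hj
        have hfiber : ∃ j, j < θ.ord ∧ ∀ b, b < (Order.succ ν).ord →
            ∃ ζ, ∃ h : ζ < (Order.succ ν).ord, b ≤ ζ ∧ jF ζ h = j := by
          by_contra hcon
          push_neg at hcon
          choose bF hbF hbne using hcon
          set b0 := Ordinal.blsub θ.ord bF with hb0
          have hb0μ : b0 < (Order.succ ν).ord :=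
            Ordinal.blsub_lt_ord
              (by rw [Cardinal.card_ord, hμreg.cof_eq]
                  exact lt_of_le_of_lt hθν (Order.lt_succ ν)) hbF
          exact hbne _ (hjF b0 hb0μ) b0 hb0μ
            (le_of_lt (Ordinal.lt_blsub bF _ (hjF b0 hb0μ))) rfl
        obtain ⟨j, hjθ, hjfib⟩ := hfiber
        refine ⟨j, hjθ, δ, hδlam, ?_⟩
        intro x hx
        have ht1 : ((e.symm ⟨x, hx⟩ : Set.Iio (Order.succ ν).ord) : Ordinal) + 1
            < (Order.succ ν).ord := hμord.succ_lt (e.symm ⟨x, hx⟩).2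
        obtain ⟨ζ, h, hle, hjeq⟩ := hjfib _ ht1
        have hmem : x ∈ pieceSet e (((e.symm ⟨x, hx⟩ : Set.Iio (Order.succ ν).ord) : Ordinal) + 1) :=
          mem_pieceSet e hx (by rw [Ordinal.add_one_eq_succ]; exact Order.lt_succ _)
        have hmem2 := pieceSet_mono e hle hmem
        rw [← hjeq]
        exact hsubj ζ h (hsubF ζ h hmem2)
    · -- limit case
      have hμeq : iterSucc θ ρ = ⨆ i : Set.Iio ρ, iterSucc θ i.1 := iterSucc_limit θ hlim
      have hne : Nonempty (Set.Iio ρ) := ⟨⟨0, hlim.pos⟩⟩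
      obtain ⟨c, hc⟩ := Cardinal.mem_range_lift_of_le hXcard
      have hcμ : c ≤ iterSucc θ ρ := by rw [← Cardinal.lift_le.{u+1}, hc]; exact hXcard
      by_cases hcase : ∃ σ, σ < ρ ∧ c ≤ iterSucc θ σ
      · obtain ⟨σ, hσρ, hcσ⟩ := hcase
        exact IH σ hσρ (hσρ.trans hρθ)
          (lt_of_le_of_lt (iterSucc_mono θ hσρ.le) hρlam) X hXT
          (by rw [← hc]; exact Cardinal.lift_le.mpr hcσ)
      · push_neg at hcase
        have hceq : c = iterSucc θ ρ := by
          refine le_antisymm hcμ ?_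
          rw [hμeq]
          exact ciSup_le' (fun i => (hcase i.1 i.2).le)
        have hXμ : #X = Cardinal.lift.{u+1} (iterSucc θ ρ) := by rw [← hc, hceq]
        obtain ⟨e⟩ : Nonempty ((Set.Iio (iterSucc θ ρ).ord) ≃ X) := by
          rw [← Cardinal.eq, Ordinal.mk_Iio_ordinal, Cardinal.card_ord, hXμ]
        have hpieces : ∀ σ, σ < ρ →
            ∃ i, i < θ.ord ∧ ∃ δ, δ < lam.ord ∧ pieceSet e (iterSucc θ σ).ord ⊆ D i δ := by
          intro σ hσρ
          refine IH σ hσρ (hσρ.trans hρθ)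
            (lt_of_le_of_lt (iterSucc_mono θ hσρ.le) hρlam) _
            ((pieceSet_subset e _).trans hXT) ?_
          calc #(pieceSet e (iterSucc θ σ).ord)
              ≤ Cardinal.lift.{u+1} (iterSucc θ σ).ord.card := pieceSet_card e _
            _ = Cardinal.lift.{u+1} (iterSucc θ σ) := by rw [Cardinal.card_ord]
        choose iF hiF δF hδF hsubF using hpieces
        have hρcard : ρ.card < θ := Cardinal.lt_ord.mp hρθ
        set δ := Ordinal.blsub ρ δF with hδdef
        have hδlam : δ < lam.ord :=
          Ordinal.blsub_lt_ord (by rw [hlam.cof_eq]; exact hρcard.trans hθlam) hδF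
        have hjex : ∀ σ (h : σ < ρ), ∃ j, j < θ.ord ∧ D (iF σ h) (δF σ h) ⊆ D j δ := by
          intro σ h
          obtain ⟨j, hj1, hj2⟩ :=
            hD.2.2 (δF σ h) δ (Ordinal.lt_blsub δF σ h) hδlam (iF σ h) (hiF σ h)
          exact ⟨j, hj1, hj2⟩
        choose jF hjF hsubj using hjex
        set j := Ordinal.blsub ρ jF with hjdef
        have hjθ : j < θ.ord :=
          Ordinal.blsub_lt_ord (by rw [hθ.cof_eq]; exact hρcard) hjF
        refine ⟨j, hjθ, δ, hδlam, ?_⟩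
        intro x hx
        obtain ⟨σ, hσρ, hσcard⟩ : ∃ σ, σ < ρ ∧
            ((e.symm ⟨x, hx⟩ : Set.Iio (iterSucc θ ρ).ord) : Ordinal).card
              < iterSucc θ σ := by
          set tc := ((e.symm ⟨x, hx⟩ : Set.Iio (iterSucc θ ρ).ord) : Ordinal).card with htc
          have htρ : tc < iterSucc θ ρ := Cardinal.lt_ord.mp (e.symm ⟨x, hx⟩).2
          by_contra hcon2
          push_neg at hcon2
          have h2 : iterSucc θ ρ ≤ tc := by
            rw [hμeq]
            exact ciSup_le' (fun i => hcon2 i.1 i.2)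
          exact absurd htρ (not_lt.mpr h2)
        have hmem : x ∈ pieceSet e (iterSucc θ σ).ord :=
          mem_pieceSet e hx (Cardinal.lt_ord.mpr hσcard)
        refine hD.2.1 δ hδlam (jF σ hσρ) j (Ordinal.lt_blsub jF σ hσρ) hjθ ?_
        exact hsubj σ hσρ (hsubF σ hσρ hmem)

end CoverLe
section Rec

attribute [local instance] Classical.propDecidable

variable (θ lam : Cardinal.{u}) (D : Ordinal.{u} → Ordinal.{u} → Set Ordinal.{u})
  (T C : Set Ordinal.{u})

def covP (X : Set Ordinal.{u}) : Ordinal.{u} × Ordinal.{u} :=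
  if h : ∃ i, i < θ.ord ∧ ∃ δ, δ < lam.ord ∧ X ⊆ D i δ then
    (h.choose, h.choose_spec.2.choose)
  else (0, 0)

theorem covP_spec {X : Set Ordinal.{u}}
    (h : ∃ i, i < θ.ord ∧ ∃ δ, δ < lam.ord ∧ X ⊆ D i δ) :
    (covP θ lam D X).1 < θ.ord ∧ (covP θ lam D X).2 < lam.ord ∧
      X ⊆ D (covP θ lam D X).1 (covP θ lam D X).2 := by
  rw [covP, dif_pos h]
  exact ⟨h.choose_spec.1, h.choose_spec.2.choose_spec.1, h.choose_spec.2.choose_spec.2⟩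

theorem covP_snd_lt (hlam : 0 < lam.ord) (X : Set Ordinal.{u}) :
    (covP θ lam D X).2 < lam.ord := by
  rw [covP]
  split_ifs with h
  · exact h.choose_spec.2.choose_spec.1
  · exact hlam

def recF (ξ : Ordinal.{u}) (ih : ∀ ζ, ζ < ξ → Ordinal.{u} × Ordinal.{u}) :
    Ordinal.{u} × Ordinal.{u} :=
  let b : Ordinal :=
    Ordinal.blsub ξ (fun ζ h => max ((ih ζ h).1) (max ((ih ζ h).2)
      ((covP θ lam D ((fun ζ' => if h' : ζ' < ξ then (ih ζ' h').2 else 0) '' Set.Iic ζ)).2)))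
  let B : Ordinal := if h : ∃ x, x ∈ C ∧ b ≤ x then h.choose else 0
  (B, if h : ∃ x, x ∈ T ∧ B + 1 ≤ x then h.choose else 0)

def rec2 : Ordinal.{u} → Ordinal.{u} × Ordinal.{u} :=
  Ordinal.lt_wf.fix (recF θ lam D T C)

theorem rec2_unfold (ξ : Ordinal.{u}) :
    rec2 θ lam D T C ξ = recF θ lam D T C ξ (fun ζ _ => rec2 θ lam D T C ζ) :=
  WellFounded.fix_eq _ _ _

def Afun (ξ : Ordinal.{u}) : Ordinal.{u} := (rec2 θ lam D T C ξ).2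

def Bfun (ξ : Ordinal.{u}) : Ordinal.{u} := (rec2 θ lam D T C ξ).1

def dfun (ζ : Ordinal.{u}) : Ordinal.{u} :=
  (covP θ lam D (Afun θ lam D T C '' Set.Iic ζ)).2

def bfun (ξ : Ordinal.{u}) : Ordinal.{u} :=
  Ordinal.blsub ξ (fun ζ _ => max (Bfun θ lam D T C ζ)
    (max (Afun θ lam D T C ζ) (dfun θ lam D T C ζ)))

theorem rec2_eq (ξ : Ordinal.{u}) :
    rec2 θ lam D T C ξ =
      ((if h : ∃ x, x ∈ C ∧ bfun θ lam D T C ξ ≤ x then h.choose else 0),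
       (if h : ∃ x, x ∈ T ∧
          (if h' : ∃ x, x ∈ C ∧ bfun θ lam D T C ξ ≤ x then h'.choose else 0) + 1 ≤ x
        then h.choose else 0)) := by
  rw [rec2_unfold, recF]
  have hb : Ordinal.blsub ξ (fun ζ h => max ((rec2 θ lam D T C ζ).1)
      (max ((rec2 θ lam D T C ζ).2)
        ((covP θ lam D ((fun ζ' => if h' : ζ' < ξ then (rec2 θ lam D T C ζ').2 else 0)
          '' Set.Iic ζ)).2))) = bfun θ lam D T C ξ := by
    unfold bfun
    congr 1
    funext ζ h
    have himg : ((fun ζ' => if h' : ζ' < ξ then (rec2 θ lam D T C ζ').2 else 0)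
        '' Set.Iic ζ) = Afun θ lam D T C '' Set.Iic ζ :=
      Set.image_congr (fun ζ' hζ' => by rw [dif_pos (lt_of_le_of_lt hζ' h)]; rfl)
    rw [himg]
    rfl
  rw [hb]

theorem dfun_lt (hlam0 : 0 < lam.ord) (ζ : Ordinal.{u}) : dfun θ lam D T C ζ < lam.ord :=
  covP_snd_lt θ lam D hlam0 _

theorem Bfun_eq (ξ : Ordinal.{u}) :
    Bfun θ lam D T C ξ =
      if h : ∃ x, x ∈ C ∧ bfun θ lam D T C ξ ≤ x then h.choose else 0 := by
  rw [Bfun, rec2_eq]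

theorem Afun_eq (ξ : Ordinal.{u}) :
    Afun θ lam D T C ξ =
      if h : ∃ x, x ∈ T ∧ Bfun θ lam D T C ξ + 1 ≤ x then h.choose else 0 := by
  rw [Afun, rec2_eq, ← Bfun_eq]

theorem rec2_invariant (hlam : lam.IsRegular) (hCsub : C ⊆ Set.Iio lam.ord)
    (hCu : IsUnboundedIn C lam.ord) (hTsub : T ⊆ Set.Iio lam.ord)
    (hTu : IsUnboundedIn T lam.ord) {κ : Cardinal.{u}} (hκlam : κ < lam) :
    ∀ ξ, ξ < κ.ord →
      Bfun θ lam D T C ξ ∈ C ∧ bfun θ lam D T C ξ ≤ Bfun θ lam D T C ξ ∧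
        Afun θ lam D T C ξ ∈ T ∧ Bfun θ lam D T C ξ + 1 ≤ Afun θ lam D T C ξ := by
  intro ξ
  induction ξ using Ordinal.induction with
  | _ ξ IH =>
    intro hξκ
    have hlamord : Order.IsSuccLimit lam.ord := Cardinal.isSuccLimit_ord hlam.aleph0_le
    have hblt : bfun θ lam D T C ξ < lam.ord := by
      refine Ordinal.blsub_lt_ord ?_ ?_
      · rw [hlam.cof_eq]
        exact (Cardinal.lt_ord.mp hξκ).trans hκlam
      · intro ζ h
        obtain ⟨h1, _, h3, _⟩ := IH ζ h (h.trans hξκ)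
        exact max_lt (hCsub h1) (max_lt (hTsub h3) (dfun_lt θ lam D T C hlamord.pos ζ))
    have hBex : ∃ x, x ∈ C ∧ bfun θ lam D T C ξ ≤ x := hCu _ hblt
    have hB : Bfun θ lam D T C ξ = hBex.choose := by rw [Bfun_eq, dif_pos hBex]
    have hBC : Bfun θ lam D T C ξ ∈ C := by rw [hB]; exact hBex.choose_spec.1
    have hBb : bfun θ lam D T C ξ ≤ Bfun θ lam D T C ξ := by
      rw [hB]; exact hBex.choose_spec.2
    have hB1 : Bfun θ lam D T C ξ + 1 < lam.ord := hlamord.succ_lt (hCsub hBC)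
    have hAex : ∃ x, x ∈ T ∧ Bfun θ lam D T C ξ + 1 ≤ x := hTu _ hB1
    have hA : Afun θ lam D T C ξ = hAex.choose := by rw [Afun_eq, dif_pos hAex]
    exact ⟨hBC, hBb, by rw [hA]; exact hAex.choose_spec.1,
      by rw [hA]; exact hAex.choose_spec.2⟩

theorem rec2_lt (hlam : lam.IsRegular) (hCsub : C ⊆ Set.Iio lam.ord)
    (hCu : IsUnboundedIn C lam.ord) (hTsub : T ⊆ Set.Iio lam.ord)
    (hTu : IsUnboundedIn T lam.ord) {κ : Cardinal.{u}} (hκlam : κ < lam) :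
    ∀ ζ ξ, ζ < ξ → ξ < κ.ord →
      max (Bfun θ lam D T C ζ) (max (Afun θ lam D T C ζ) (dfun θ lam D T C ζ))
        < Bfun θ lam D T C ξ := by
  intro ζ ξ hζξ hξκ
  have h1 : max (Bfun θ lam D T C ζ) (max (Afun θ lam D T C ζ) (dfun θ lam D T C ζ))
      < bfun θ lam D T C ξ :=
    Ordinal.lt_blsub (fun ζ' _ => max (Bfun θ lam D T C ζ')
      (max (Afun θ lam D T C ζ') (dfun θ lam D T C ζ'))) ζ hζξ
  exact h1.trans_le
    (rec2_invariant θ lam D T C hlam hCsub hCu hTsub hTu hκlam ξ hξκ).2.1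

end Rec

/-- If `CP(D)` holds for a `θ`-covering matrix `D` for `lam`, then for every
successor ordinal `η < θ` with `θ^{+η} < lam`, the set `A_D ∩ S^lam_{θ^{+η}}` is stationary
in `lam`. -/
theorem stmt14 (θ lam : Cardinal) (hθ : θ.IsRegular) (hlam : lam.IsRegular) (hθlam : θ < lam)
    (D : Ordinal → Ordinal → Set Ordinal) (hD : IsCoveringMatrix θ lam D)
    (hcp : CP θ lam D) :
    ∀ η < θ.ord, (∃ ξ, η = ξ + 1) → iterSucc θ η < lam →
      IsStationaryIn (goodPoints θ lam D ∩ {β | Ordinal.cof β = iterSucc θ η})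
        lam.ord := by
  intro η hηθ hsucc hκlam Cl hCl
  obtain ⟨ξ₀, rfl⟩ := hsucc
  obtain ⟨T, hTsub, hTu, hcov⟩ := hcp
  obtain ⟨hClsub, hClu, hClcl⟩ := hCl
  have hκν : iterSucc θ (ξ₀ + 1) = Order.succ (iterSucc θ ξ₀) := iterSucc_succ θ ξ₀
  set ν := iterSucc θ ξ₀ with hνdef
  set κ := Order.succ ν with hκdef
  have hξ₀θ : ξ₀ < θ.ord :=
    lt_trans (by rw [Ordinal.add_one_eq_succ]; exact Order.lt_succ ξ₀) hηθ
  have hθν : θ ≤ ν := le_iterSucc θ ξ₀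
  have hνinf : ℵ₀ ≤ ν := hθ.aleph0_le.trans hθν
  have hκreg : κ.IsRegular := Cardinal.isRegular_succ hνinf
  have hκlam' : κ < lam := hκν ▸ hκlam
  have hνlam : ν < lam := (Order.lt_succ ν).trans hκlam'
  have hκθ : θ < κ := lt_of_le_of_lt hθν (Order.lt_succ ν)
  have hκordlim : Order.IsSuccLimit κ.ord := Cardinal.isSuccLimit_ord hκreg.aleph0_le
  have hlamord : Order.IsSuccLimit lam.ord := Cardinal.isSuccLimit_ord hlam.aleph0_le
  have hcover := cover_le hθ hlam hθlam hD hTsub hTu hcov ξ₀ hξ₀θ hνlam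
  have hinv := rec2_invariant θ lam D T Cl hlam hClsub hClu hTsub hTu hκlam'
  have hmono := rec2_lt θ lam D T Cl hlam hClsub hClu hTsub hTu hκlam'
  -- covering of initial segments of the A-sequence
  have hex : ∀ ξ, ξ < κ.ord → ∃ i, i < θ.ord ∧ ∃ δ, δ < lam.ord ∧
      (Afun θ lam D T Cl '' Set.Iic ξ) ⊆ D i δ := by
    intro ξ hξ
    refine hcover _ ?_ ?_
    · rintro x ⟨ζ, hζ, rfl⟩
      exact (hinv ζ (lt_of_le_of_lt hζ hξ)).2.2.1
    · have h1 : #(Afun θ lam D T Cl '' Set.Iic ξ) ≤ #(Set.Iic ξ) := Cardinal.mk_image_le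
      have h2 : (Set.Iic ξ : Set Ordinal) = Set.Iio (Order.succ ξ) := (Order.Iio_succ ξ).symm
      have h3 : Order.succ ξ < κ.ord := by
        rw [← Ordinal.add_one_eq_succ]; exact hκordlim.succ_lt hξ
      have h4 : (Order.succ ξ).card ≤ ν := Order.lt_succ_iff.mp (Cardinal.lt_ord.mp h3)
      calc #(Afun θ lam D T Cl '' Set.Iic ξ) ≤ #(Set.Iic ξ) := h1
        _ = Cardinal.lift (Order.succ ξ).card := by
            rw [h2, Ordinal.mk_Iio_ordinal]
        _ ≤ Cardinal.lift ν := Cardinal.lift_le.mpr h4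
  have hdspec : ∀ ξ, ξ < κ.ord →
      (covP θ lam D (Afun θ lam D T Cl '' Set.Iic ξ)).1 < θ.ord ∧
      dfun θ lam D T Cl ξ < lam.ord ∧
      (Afun θ lam D T Cl '' Set.Iic ξ) ⊆
        D (covP θ lam D (Afun θ lam D T Cl '' Set.Iic ξ)).1 (dfun θ lam D T Cl ξ) :=
    fun ξ hξ => covP_spec θ lam D (hex ξ hξ)
  -- the reflection point
  set β := Ordinal.blsub κ.ord (fun ξ _ => Bfun θ lam D T Cl ξ) with hβdef
  have hβlam : β < lam.ord := by
    refine Ordinal.blsub_lt_ord ?_ (fun ξ h => hClsub (hinv ξ h).1)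
    rw [Cardinal.card_ord, hlam.cof_eq]; exact hκlam'
  have hBltβ : ∀ ξ, ξ < κ.ord → Bfun θ lam D T Cl ξ < β :=
    fun ξ h => Ordinal.lt_blsub _ ξ h
  have hleB : ∀ γ, γ < β → ∃ ξ, ∃ h : ξ < κ.ord, γ ≤ Bfun θ lam D T Cl ξ :=
    fun γ hγ => Ordinal.lt_blsub_iff.mp hγ
  have hBmono : ∀ ζ ξ, ζ < ξ → ξ < κ.ord →
      Bfun θ lam D T Cl ζ < Bfun θ lam D T Cl ξ :=
    fun ζ ξ h hξ => lt_of_le_of_lt (le_max_left _ _) (hmono ζ ξ h hξ)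
  have hAltB : ∀ ζ ξ, ζ < ξ → ξ < κ.ord →
      Afun θ lam D T Cl ζ < Bfun θ lam D T Cl ξ :=
    fun ζ ξ h hξ =>
      lt_of_le_of_lt ((le_max_left _ _).trans (le_max_right _ _)) (hmono ζ ξ h hξ)
  have hdltB : ∀ ζ ξ, ζ < ξ → ξ < κ.ord →
      dfun θ lam D T Cl ζ < Bfun θ lam D T Cl ξ :=
    fun ζ ξ h hξ =>
      lt_of_le_of_lt ((le_max_right _ _).trans (le_max_right _ _)) (hmono ζ ξ h hξ)
  have hBA : ∀ ξ, ξ < κ.ord → Bfun θ lam D T Cl ξ < Afun θ lam D T Cl ξ := by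
    intro ξ hξ
    have := (hinv ξ hξ).2.2.2
    have h1 : Bfun θ lam D T Cl ξ < Bfun θ lam D T Cl ξ + 1 := by
      rw [Ordinal.add_one_eq_succ]; exact Order.lt_succ _
    exact lt_of_lt_of_le h1 this
  have hsucclt : ∀ ξ, ξ < κ.ord → ξ + 1 < κ.ord := fun ξ h => hκordlim.succ_lt h
  -- β is in the club
  have hβpos : 0 < β := lt_of_le_of_lt (zero_le (a := _)) (hBltβ 0 hκordlim.pos)
  have hβCl : β ∈ Cl := by
    refine hClcl β hβlam hβpos ?_
    intro γ hγ
    obtain ⟨ξ, hξ, hle⟩ := hleB γ hγ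
    refine ⟨Bfun θ lam D T Cl (ξ + 1), (hinv (ξ + 1) (hsucclt ξ hξ)).1,
      lt_of_le_of_lt hle (hBmono ξ (ξ + 1) (by rw [Ordinal.add_one_eq_succ]; exact Order.lt_succ ξ) (hsucclt ξ hξ)), hBltβ (ξ + 1) (hsucclt ξ hξ)⟩
  -- cofinality of β
  have hcofβ : Ordinal.cof β = κ := by
    refine le_antisymm ?_ ?_
    · have := Ordinal.cof_blsub_le (fun ξ (_ : ξ < κ.ord) => Bfun θ lam D T Cl ξ)
      rwa [Cardinal.card_ord] at this
    · rw [Ordinal.le_cof_iff_blsub]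
      intro o f hf
      by_contra hno
      push_neg at hno
      have hSne : ∀ a (ha : a < o), {p : Ordinal | p < κ.ord ∧ f a ha < Bfun θ lam D T Cl p}.Nonempty := by
        intro a ha
        have hfa : f a ha < β := hf ▸ Ordinal.lt_blsub f a ha
        obtain ⟨ξ, hξ, hle⟩ := hleB _ hfa
        exact ⟨ξ + 1, hsucclt ξ hξ, lt_of_le_of_lt hle
          (hBmono ξ (ξ + 1) (by rw [Ordinal.add_one_eq_succ]; exact Order.lt_succ ξ)
            (hsucclt ξ hξ))⟩
      set G : ∀ a, a < o → Ordinal :=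
        fun a ha => sInf {p : Ordinal | p < κ.ord ∧ f a ha < Bfun θ lam D T Cl p} with hGdef
      have hGspec : ∀ a (ha : a < o),
          G a ha < κ.ord ∧ f a ha < Bfun θ lam D T Cl (G a ha) :=
        fun a ha => csInf_mem (hSne a ha)
      have hxistar : Ordinal.blsub o G < κ.ord := by
        refine Ordinal.blsub_lt_ord ?_ (fun a ha => (hGspec a ha).1)
        rw [hκreg.cof_eq]; exact hno
      have hBβ : Bfun θ lam D T Cl (Ordinal.blsub o G) < β := hBltβ _ hxistar
      rw [← hf] at hBβ
      obtain ⟨a, ha, hle⟩ := Ordinal.lt_blsub_iff.mp hBβ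
      have h1 : Bfun θ lam D T Cl (G a ha) < Bfun θ lam D T Cl (Ordinal.blsub o G) :=
        hBmono _ _ (Ordinal.lt_blsub G a ha) hxistar
      exact absurd ((hGspec a ha).2.trans (h1.trans_le hle)) (lt_irrefl _)
  -- β is a good point
  refine ⟨β, ⟨⟨hβlam, (by rw [hcofβ]; exact hκθ), ?_⟩, (by
    show Ordinal.cof β = iterSucc θ (ξ₀ + 1)
    rw [hcofβ, hκν])⟩, hβCl⟩
  refine ⟨Afun θ lam D T Cl '' Set.Iio κ.ord, ?_, ?_, ?_⟩
  · rintro x ⟨ξ, hξ, rfl⟩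
    exact lt_trans (hAltB ξ (ξ + 1)
      (by rw [Ordinal.add_one_eq_succ]; exact Order.lt_succ ξ) (hsucclt ξ hξ))
      (hBltβ (ξ + 1) (hsucclt ξ hξ))
  · intro γ hγ
    obtain ⟨ξ, hξ, hle⟩ := hleB γ hγ
    exact ⟨Afun θ lam D T Cl ξ, ⟨ξ, hξ, rfl⟩, hle.trans (hBA ξ hξ).le⟩
  · intro γ hγ
    obtain ⟨ξ, hξ, hle⟩ := hleB γ hγ
    refine ⟨dfun θ lam D T Cl ξ,
      lt_trans (hdltB ξ (ξ + 1)
        (by rw [Ordinal.add_one_eq_succ]; exact Order.lt_succ ξ) (hsucclt ξ hξ))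
        (hBltβ (ξ + 1) (hsucclt ξ hξ)),
      (covP θ lam D (Afun θ lam D T Cl '' Set.Iic ξ)).1, (hdspec ξ hξ).1, ?_⟩
    rintro x ⟨⟨ζ, hζ, rfl⟩, hxγ⟩
    have hζξ : ζ ≤ ξ := by
      by_contra hcon
      push_neg at hcon
      have h1 : Bfun θ lam D T Cl ξ < Afun θ lam D T Cl ζ :=
        lt_trans (hBmono ξ ζ hcon hζ) (hBA ζ hζ)
      exact absurd (lt_of_le_of_lt (le_of_lt hxγ) (lt_of_le_of_lt hle h1)) (lt_irrefl _)
    exact (hdspec ξ hξ).2.2 ⟨ζ, hζξ, rfl⟩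

end
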